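/- If ρ' is a sub-normalised positive operator with purified distance P(ρ,ρ') ≤ ε from a state ρ and ρ' ≤ 2^λ σ for a state σ, then the normalised state ρ̃ = ρ'/Tr ρ' satisfies (1/2)‖ρ − ρ̃‖₁ ≤ ε and ρ̃ ≤ 2^{λ + log₂(1/(1−ε))} σ. -/

import Mathlib

open Matrix BigOperators
open scoped Kronecker ComplexOrder

noncomputable section



abbrev BOp (d : ℕ) := Matrix (Fin d × Fin d) (Fin d × Fin d) ℂ

/-- Loewner order: `A ≤ B` iff `B - A` is positive semidefinite. -/
def loe {n : Type*} [Fintype n] (A B : Matrix n n ℂ) : Prop := (B - A).PosSemidef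

/-- A density operator: positive semidefinite with unit trace. -/
def IsState {n : Type*} [Fintype n] [DecidableEq n] (ρ : Matrix n n ℂ) : Prop :=
  ρ.PosSemidef ∧ ρ.trace = 1

/-- Separable bipartite state (convex combination of product states). -/
def IsSep {a b : Type*} [Fintype a] [DecidableEq a] [Fintype b] [DecidableEq b]
    (ρ : Matrix (a × b) (a × b) ℂ) : Prop :=
  ∃ (m : ℕ) (p : Fin m → ℝ) (A : Fin m → Matrix a a ℂ) (B : Fin m → Matrix b b ℂ),
    (∀ i, 0 ≤ p i) ∧ (∑ i, p i) = 1 ∧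
    (∀ i, IsState (A i)) ∧ (∀ i, IsState (B i)) ∧
    ρ = ∑ i, ((p i : ℝ) : ℂ) • (A i ⊗ₖ B i)

/-- The cone generated by separable states. -/
def InSepCone {a b : Type*} [Fintype a] [DecidableEq a] [Fintype b] [DecidableEq b]
    (S : Matrix (a × b) (a × b) ℂ) : Prop :=
  ∃ (c : ℝ) (σ : Matrix (a × b) (a × b) ℂ), 0 ≤ c ∧ IsSep σ ∧ S = ((c : ℝ) : ℂ) • σ

/-- Maximally entangled state `Φ_d` on `ℂ^d ⊗ ℂ^d`. -/
def PhiME (d : ℕ) : BOp d := fun p q => if p.1 = p.2 ∧ q.1 = q.2 then ((1 : ℂ) / d) else 0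

/-- `τ_d = (𝟙 - Φ_d)/(d² - 1)`. -/
def tauME (d : ℕ) : BOp d := (((d : ℂ)^2 - 1))⁻¹ • (1 - PhiME d)

/-- Partial transpose on the second tensor factor. -/
def pt {a b : Type*} (A : Matrix (a × b) (a × b) ℂ) : Matrix (a × b) (a × b) ℂ :=
  fun p q => A (p.1, q.2) (q.1, p.2)

/-- Total positive-semidefinite square root (junk value `0` off the PSD cone). -/
noncomputable def msqrt {n : Type*} [Fintype n] [DecidableEq n] (A : Matrix n n ℂ) :
    Matrix n n ℂ :=
  open scoped Classical in
  if h : A.PosSemidef then (h.1.eigenvectorUnitary : Matrix n n ℂ) *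
    diagonal ((↑) ∘ Real.sqrt ∘ h.1.eigenvalues) * (star h.1.eigenvectorUnitary : Matrix n n ℂ)
    else 0

/-- Trace norm `‖A‖₁ = Tr √(AᴴA)`. -/
noncomputable def traceNorm {n : Type*} [Fintype n] [DecidableEq n] (A : Matrix n n ℂ) : ℝ :=
  (msqrt (Aᴴ * A)).trace.re


/-- Generalised (Uhlmann) fidelity for sub-normalised positive operators. -/
noncomputable def gFid {n : Type*} [Fintype n] [DecidableEq n] (ρ σ : Matrix n n ℂ) : ℝ :=
  (traceNorm (msqrt ρ * msqrt σ) + Real.sqrt ((1 - ρ.trace.re) * (1 - σ.trace.re))) ^ 2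

/-- Purified distance. -/
noncomputable def pDist {n : Type*} [Fintype n] [DecidableEq n] (ρ σ : Matrix n n ℂ) : ℝ :=
  Real.sqrt (1 - gFid ρ σ)

/-- Generalised trace distance. -/
noncomputable def gTDist {n : Type*} [Fintype n] [DecidableEq n] (ρ σ : Matrix n n ℂ) : ℝ :=
  traceNorm (ρ - σ) / 2 + |ρ.trace.re - σ.trace.re| / 2

set_option linter.unusedSectionVars false
set_option maxHeartbeats 1600000

section Aux
variable {n : Type*} [Fintype n] [DecidableEq n]
open scoped MatrixOrder

lemma psd_smul {A : Matrix n n ℂ} (hA : A.PosSemidef) {c : ℝ} (hc : 0 ≤ c) :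
    (((c:ℝ):ℂ) • A).PosSemidef := by
  exact hA.smul (by exact_mod_cast hc)

lemma psd_trace_re_nonneg {A : Matrix n n ℂ} (hA : A.PosSemidef) : 0 ≤ A.trace.re := by
  simpa using (Complex.le_def.mp hA.trace_nonneg).1

lemma psd_trace_real {A : Matrix n n ℂ} (hA : A.PosSemidef) :
    A.trace = ((A.trace.re : ℝ) : ℂ) := by
  have h := Matrix.trace_conjTranspose A
  rw [hA.1] at h
  have him : A.trace.im = 0 := by
    have := congrArg Complex.im h
    simp at this
    linarith
  exact Complex.ext rfl (by simp [him])


lemma msqrt_of_psd {A : Matrix n n ℂ} (hA : A.PosSemidef) : msqrt A = CFC.sqrt A := by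
  rw [msqrt, dif_pos hA, CFC.sqrt_eq_real_sqrt A (nonneg_iff_posSemidef.mpr hA), cfcₙ_eq_cfc, hA.1.cfc_eq,
    IsHermitian.cfc, Unitary.conjStarAlgAut_apply]
  rfl

def lamM (M : Matrix n n ℂ) (i : n) : ℝ :=
  (posSemidef_conjTranspose_mul_self M).1.eigenvalues i

lemma tn_eq_sum (M : Matrix n n ℂ) :
    traceNorm M = ∑ i, Real.sqrt (lamM M i) := by
  simp only [lamM]
  have h := posSemidef_conjTranspose_mul_self M
  rw [traceNorm, msqrt, dif_pos h]
  rw [Matrix.trace_mul_cycle]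
  rw [show (star (h.1.eigenvectorUnitary : Matrix n n ℂ)) * (h.1.eigenvectorUnitary : Matrix n n ℂ) = 1 from (Matrix.mem_unitaryGroup_iff').mp h.1.eigenvectorUnitary.2, Matrix.one_mul,
    Matrix.trace_diagonal]
  simp [Complex.re_sum]

lemma tn_nonneg (M : Matrix n n ℂ) : 0 ≤ traceNorm M := by
  rw [tn_eq_sum]
  exact Finset.sum_nonneg fun i _ => Real.sqrt_nonneg _

section Duality

variable (M : Matrix n n ℂ)

def wcol (M : Matrix n n ℂ) (i : n) : n → ℂ :=
  ⇑((posSemidef_conjTranspose_mul_self M).1.eigenvectorBasis i)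

def mcol (M : Matrix n n ℂ) (i : n) : EuclideanSpace ℂ n :=
  (WithLp.equiv 2 (n → ℂ)).symm (M *ᵥ wcol M i)

lemma lamM_nonneg (i : n) : 0 ≤ lamM M i :=
  (posSemidef_conjTranspose_mul_self M).eigenvalues_nonneg i

lemma inner_symm_eq_dot (u v : n → ℂ) :
    (inner ℂ ((WithLp.equiv 2 (n → ℂ)).symm u) ((WithLp.equiv 2 (n → ℂ)).symm v) : ℂ)
      = dotProduct (star u) v := by
  simp [PiLp.inner_apply, RCLike.inner_apply, dotProduct, mul_comm]

lemma key_col (i j : n) :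
    dotProduct (star (M *ᵥ wcol M i)) (M *ᵥ wcol M j)
      = if i = j then ((lamM M j : ℝ) : ℂ) else 0 := by
  have h := posSemidef_conjTranspose_mul_self M
  show dotProduct (star (M *ᵥ (h.1.eigenvectorBasis i))) (M *ᵥ (h.1.eigenvectorBasis j))
      = if i = j then ((h.1.eigenvalues j : ℝ) : ℂ) else 0
  rw [Matrix.star_mulVec, ← dotProduct_mulVec, Matrix.mulVec_mulVec]
  rw [show (Mᴴ * M) *ᵥ (h.1.eigenvectorBasis j) = _ from h.1.mulVec_eigenvectorBasis j]
  rw [dotProduct_smul]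
  have := h.1.eigenvectorBasis.orthonormal
  rw [orthonormal_iff_ite] at this
  have h5 : (h.1.eigenvalues j : ℝ) • (inner ℂ (h.1.eigenvectorBasis i)
      (h.1.eigenvectorBasis j) : ℂ) = if i = j then ((h.1.eigenvalues j : ℝ) : ℂ) else 0 := by
    rw [this i j]; split_ifs <;> simp [Complex.real_smul]
  refine Eq.trans ?_ h5
  congr 1
  simp [PiLp.inner_apply, RCLike.inner_apply, dotProduct, mul_comm]

lemma key_inner (i j : n) :
    (inner ℂ (mcol M i) (mcol M j) : ℂ) = if i = j then ((lamM M j : ℝ) : ℂ) else 0 := by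
  rw [mcol, mcol, inner_symm_eq_dot, key_col]

lemma norm_col (i : n) : ‖mcol M i‖ = Real.sqrt (lamM M i) := by
  have h1 := key_inner M i i
  rw [if_pos rfl, inner_self_eq_norm_sq_to_K] at h1
  have h2 : (‖mcol M i‖:ℝ)^2 = lamM M i := by
    exact Complex.ofReal_inj.mp (by push_cast; exact h1)
  rw [← h2, Real.sqrt_sq (norm_nonneg _)]


lemma mcol_eq_zero (i : n) (hi : lamM M i = 0) : M *ᵥ wcol M i = 0 := by
  apply dotProduct_star_self_eq_zero.mp
  rw [key_col M i i, if_pos rfl, hi]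
  simp

lemma tn_attain :
    ∃ V : Matrix n n ℂ, V ∈ Matrix.unitaryGroup n ℂ ∧
      (star V * M).trace = ((traceNorm M : ℝ) : ℂ) := by
  classical
  have h := posSemidef_conjTranspose_mul_self M
  set s : Set n := {i | lamM M i ≠ 0} with hsdef
  set v : n → EuclideanSpace ℂ n := fun i =>
    (((Real.sqrt (lamM M i))⁻¹ : ℝ) : ℂ) • mcol M i with hvdef
  have hortho : Orthonormal ℂ (s.restrict v) := by
    rw [orthonormal_iff_ite]
    rintro ⟨i, hi⟩ ⟨j, hj⟩
    have hthis : (inner ℂ (v i) (v j) : ℂ) = ((Real.sqrt (lamM M i))⁻¹ : ℝ) *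
        ((Real.sqrt (lamM M j))⁻¹ : ℝ) * (if i = j then ((lamM M j : ℝ) : ℂ) else 0) := by
      rw [hvdef]
      simp only [inner_smul_left, inner_smul_right, key_inner M i j]
      rw [Complex.conj_ofReal]
      ring
    change inner ℂ (v i) (v j) = _
    rw [hthis]
    by_cases hij : i = j
    · subst hij
      have hpos : 0 < lamM M i := lt_of_le_of_ne (lamM_nonneg M i) (Ne.symm hi)
      rw [if_pos rfl, if_pos rfl]
      rw [← Complex.ofReal_mul, ← Complex.ofReal_mul]
      have hs : Real.sqrt (lamM M i) ≠ 0 := by positivity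
      have hmul : Real.sqrt (lamM M i) * Real.sqrt (lamM M i) = lamM M i :=
        Real.mul_self_sqrt hpos.le
      rw [show (Real.sqrt (lamM M i))⁻¹ * (Real.sqrt (lamM M i))⁻¹ * lamM M i = 1 by
        field_simp [hmul]; rw [Real.sq_sqrt hpos.le]]
      simp
    · rw [if_neg hij, if_neg (by simpa [Subtype.ext_iff] using hij)]
      simp
  obtain ⟨b, hb⟩ := hortho.exists_orthonormalBasis_extension_of_card_eq
    (finrank_euclideanSpace (𝕜 := ℂ) (ι := n))
  set U : Matrix n n ℂ := fun x i => b i x with hUdef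
  have hU : U ∈ Matrix.unitaryGroup n ℂ := by
    rw [Matrix.mem_unitaryGroup_iff']
    ext i j
    have hbij := (orthonormal_iff_ite.mp b.orthonormal) i j
    have hent : (star U * U) i j = (inner ℂ (b i) (b j) : ℂ) := by
      rw [Matrix.mul_apply]
      simp only [PiLp.inner_apply, RCLike.inner_apply, Matrix.conjTranspose_apply]
      exact Finset.sum_congr rfl fun x _ => mul_comm _ _
    rw [hent, hbij, Matrix.one_apply]
  set W : Matrix n n ℂ :=
    ((posSemidef_conjTranspose_mul_self M).1.eigenvectorUnitary : Matrix n n ℂ) with hWdef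
  refine ⟨U * star W,
    Submonoid.mul_mem _ hU
      (Unitary.star_mem (posSemidef_conjTranspose_mul_self M).1.eigenvectorUnitary.2), ?_⟩
  have hsV : star (U * star W) * M = W * (star U * M) := by
    rw [Matrix.star_mul, star_star, Matrix.mul_assoc]
  rw [hsV, Matrix.trace_mul_comm, Matrix.mul_assoc]
  have hcol : ∀ i, (fun x => (M * W) x i) = M *ᵥ wcol M i := by
    intro i
    funext x
    rw [Matrix.mul_apply, Matrix.mulVec, dotProduct]
    rfl
  have hdiag : ∀ i, (star U * (M * W)) i i = ((Real.sqrt (lamM M i) : ℝ) : ℂ) := by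
    intro i
    have hentry : (star U * (M * W)) i i = (inner ℂ (b i) (mcol M i) : ℂ) := by
      rw [Matrix.mul_apply, mcol, ← hcol i]
      simp only [PiLp.inner_apply, RCLike.inner_apply, Matrix.conjTranspose_apply]
      exact Finset.sum_congr rfl fun x _ => mul_comm _ _
    rw [hentry]
    by_cases hi : i ∈ s
    · have hlpos : 0 < lamM M i := lt_of_le_of_ne (lamM_nonneg M i) (Ne.symm hi)
      have hMwv : mcol M i = ((Real.sqrt (lamM M i) : ℝ) : ℂ) • v i := by
        rw [hvdef]
        rw [smul_smul, ← Complex.ofReal_mul, mul_inv_cancel₀ (by positivity)]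
        simp
      rw [hMwv, hb i hi, inner_smul_right]
      have hone : (inner ℂ (v i) (v i) : ℂ) = 1 := by
        rw [← hb i hi]
        simpa using (orthonormal_iff_ite.mp b.orthonormal) i i
      rw [hone, mul_one]
    · have hl0 : lamM M i = 0 := by simpa [hsdef] using hi
      rw [mcol, mcol_eq_zero M i hl0]
      simp [hl0]
  have htr : (star U * (M * W)).trace = ∑ i, ((Real.sqrt (lamM M i) : ℝ) : ℂ) := by
    rw [Matrix.trace]
    exact Finset.sum_congr rfl fun i _ => hdiag i
  rw [htr, tn_eq_sum]
  push_cast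
  rfl

lemma tn_bound (V : Matrix n n ℂ) (hV : V ∈ Matrix.unitaryGroup n ℂ) :
    ‖(star V * M).trace‖ ≤ traceNorm M := by
  classical
  set W : Matrix n n ℂ :=
    ((posSemidef_conjTranspose_mul_self M).1.eigenvectorUnitary : Matrix n n ℂ) with hWdef
  have hWU : W ∈ Matrix.unitaryGroup n ℂ :=
    (posSemidef_conjTranspose_mul_self M).1.eigenvectorUnitary.2
  have hWW : W * star W = 1 := (Matrix.mem_unitaryGroup_iff).mp hWU
  set Q : Matrix n n ℂ := V * W with hQdef
  have hQU : Q ∈ Matrix.unitaryGroup n ℂ := Submonoid.mul_mem _ hV hWU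
  have htr : (star V * M).trace = (star Q * (M * W)).trace := by
    have h1 : star Q * (M * W) = star W * (star V * (M * W)) := by
      rw [hQdef, Matrix.star_mul, Matrix.mul_assoc]
    rw [h1, Matrix.trace_mul_comm (star W) (star V * (M * W)), Matrix.mul_assoc, Matrix.mul_assoc, hWW, Matrix.mul_one]
  rw [htr, Matrix.trace]
  refine le_trans (norm_sum_le _ _) ?_
  rw [tn_eq_sum]
  apply Finset.sum_le_sum
  intro i _
  set q : EuclideanSpace ℂ n := (WithLp.equiv 2 (n → ℂ)).symm (fun x => Q x i) with hqdef
  have hcol : (fun x => (M * W) x i) = M *ᵥ wcol M i := by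
    funext x
    rw [Matrix.mul_apply, Matrix.mulVec, dotProduct]
    rfl
  have hentry : (star Q * (M * W)) i i = (inner ℂ q (mcol M i) : ℂ) := by
    rw [Matrix.mul_apply, mcol, ← hcol]
    simp only [PiLp.inner_apply, RCLike.inner_apply, Matrix.conjTranspose_apply]
    exact Finset.sum_congr rfl fun x _ => mul_comm _ _
  have hqnorm : ‖q‖ = 1 := by
    have h1 : (inner ℂ q q : ℂ) = (star Q * Q) i i := by
      rw [hqdef, inner_symm_eq_dot, Matrix.mul_apply, dotProduct]
      rfl
    rw [(Matrix.mem_unitaryGroup_iff').mp hQU, Matrix.one_apply_eq,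
      inner_self_eq_norm_sq_to_K] at h1
    have h2 : ‖q‖^2 = (1:ℝ) := by
      exact Complex.ofReal_eq_one.mp (by push_cast; exact h1)
    nlinarith [norm_nonneg q]
  have hbd := norm_inner_le_norm (𝕜 := ℂ) q (mcol M i)
  rw [norm_col M i] at hbd
  calc ‖(star Q * (M * W)).diag i‖
      = ‖(inner ℂ q (mcol M i) : ℂ)‖ := by
        exact congrArg _ hentry
    _ ≤ ‖q‖ * Real.sqrt (lamM M i) := hbd
    _ = Real.sqrt (lamM M i) := by rw [hqnorm, one_mul]

end Duality

section Corollaries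

lemma frob_cs (A B : Matrix n n ℂ) :
    ‖(Aᴴ * B).trace‖ ≤
      Real.sqrt ((Aᴴ * A).trace.re) * Real.sqrt ((Bᴴ * B).trace.re) := by
  classical
  set a : EuclideanSpace ℂ (n × n) := (WithLp.equiv 2 (n × n → ℂ)).symm (fun p => A p.1 p.2)
  set b : EuclideanSpace ℂ (n × n) := (WithLp.equiv 2 (n × n → ℂ)).symm (fun p => B p.1 p.2)
  have hinner : ∀ (X Y : Matrix n n ℂ),
      (inner ℂ ((WithLp.equiv 2 (n × n → ℂ)).symm (fun p => X p.1 p.2))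
        ((WithLp.equiv 2 (n × n → ℂ)).symm (fun p => Y p.1 p.2)) : ℂ) = (Xᴴ * Y).trace := by
    intro X Y
    rw [PiLp.inner_apply]
    simp only [RCLike.inner_apply, Matrix.trace, Matrix.diag, Matrix.mul_apply,
      Matrix.conjTranspose_apply]
    rw [← Finset.sum_product', Finset.univ_product_univ]
    exact Fintype.sum_equiv (Equiv.prodComm n n) _ _ (fun p => mul_comm _ _)
  have hnorm : ∀ (X : Matrix n n ℂ),
      ‖(WithLp.equiv 2 (n × n → ℂ)).symm (fun p => X p.1 p.2)‖ = Real.sqrt ((Xᴴ * X).trace.re) := by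
    intro X
    have h1 := hinner X X
    rw [inner_self_eq_norm_sq_to_K] at h1
    have h2 : (‖(WithLp.equiv 2 (n × n → ℂ)).symm (fun p => X p.1 p.2)‖:ℝ)^2
        = ((Xᴴ * X).trace).re := by
      have h3 : ((‖(WithLp.equiv 2 (n × n → ℂ)).symm (fun p => X p.1 p.2)‖^2 : ℝ) : ℂ)
          = (Xᴴ * X).trace := by push_cast; exact h1
      rw [← h3, Complex.ofReal_re]
    rw [← h2, Real.sqrt_sq (norm_nonneg _)]
  calc ‖(Aᴴ * B).trace‖ = ‖(inner ℂ a b : ℂ)‖ := by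
        rw [hinner A B]
    _ ≤ ‖a‖ * ‖b‖ := norm_inner_le_norm _ _
    _ = _ := by rw [hnorm A, hnorm B]

lemma tn_cs (X Y : Matrix n n ℂ) :
    traceNorm (X * Y) ≤ Real.sqrt ((Xᴴ * X).trace.re) * Real.sqrt ((Yᴴ * Y).trace.re) := by
  obtain ⟨V, hV, htr⟩ := tn_attain (X * Y)
  have h1 : traceNorm (X * Y) = ‖(star V * (X * Y)).trace‖ := by
    rw [htr]; simp [Complex.norm_real, abs_of_nonneg (tn_nonneg _)]
  rw [h1]
  have h2 : (star V * (X * Y)).trace = (Yᴴᴴ * (star V * X)).trace := by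
    rw [Matrix.conjTranspose_conjTranspose, ← Matrix.mul_assoc, Matrix.trace_mul_comm]
  rw [h2]
  refine le_trans (frob_cs Yᴴ (star V * X)) ?_
  have e1 : (Yᴴᴴ * Yᴴ).trace = (Yᴴ * Y).trace := by
    rw [Matrix.conjTranspose_conjTranspose, Matrix.trace_mul_comm]
  have e2 : ((star V * X)ᴴ * (star V * X)) = Xᴴ * X := by
    rw [Matrix.conjTranspose_mul, Matrix.star_eq_conjTranspose,
      Matrix.conjTranspose_conjTranspose, Matrix.mul_assoc, ← Matrix.mul_assoc V Vᴴ X]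
    rw [show V * Vᴴ = 1 from (Matrix.mem_unitaryGroup_iff).mp hV, Matrix.one_mul]
  rw [e1, e2]
  exact le_of_eq (mul_comm _ _)

end Corollaries

lemma msqrt_psd {A : Matrix n n ℂ} (hA : A.PosSemidef) : (msqrt A).PosSemidef := by
  rw [msqrt_of_psd hA]; exact (nonneg_iff_posSemidef.mp (CFC.sqrt_nonneg A))

lemma msqrt_herm {A : Matrix n n ℂ} (hA : A.PosSemidef) : (msqrt A)ᴴ = msqrt A :=
  (msqrt_psd hA).1

lemma msqrt_mul_self {A : Matrix n n ℂ} (hA : A.PosSemidef) : msqrt A * msqrt A = A := by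
  rw [msqrt_of_psd hA]; exact CFC.sqrt_mul_sqrt_self A (nonneg_iff_posSemidef.mpr hA)

lemma tn_psd_eq_trace {A : Matrix n n ℂ} (hA : A.PosSemidef) : traceNorm A = A.trace.re := by
  have h2 : (A * A).PosSemidef := by
    have := hA.pow 2
    rwa [pow_two] at this
  have hAA : Aᴴ * A = A * A := by rw [hA.1]
  rw [traceNorm, hAA, msqrt_of_psd h2]
  have : A = CFC.sqrt (A * A) := (CFC.sqrt_unique rfl (nonneg_iff_posSemidef.mpr hA)).symm
  rw [← this]

lemma msqrt_smul {A : Matrix n n ℂ} (hA : A.PosSemidef) {c : ℝ} (hc : 0 ≤ c) :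
    msqrt (((c:ℝ):ℂ) • A) = ((Real.sqrt c : ℝ):ℂ) • msqrt A := by
  have h' : (((c:ℝ):ℂ) • A).PosSemidef := psd_smul hA hc
  have hs : (((Real.sqrt c : ℝ):ℂ) • msqrt A).PosSemidef := psd_smul (msqrt_psd hA) (Real.sqrt_nonneg c)
  rw [msqrt_of_psd h']
  refine CFC.sqrt_unique ?_ (nonneg_iff_posSemidef.mpr hs)
  rw [Matrix.smul_mul, Matrix.mul_smul, smul_smul, msqrt_mul_self hA,
    ← Complex.ofReal_mul, Real.mul_self_sqrt hc]

lemma tn_smul (M : Matrix n n ℂ) {c : ℝ} (hc : 0 ≤ c) :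
    traceNorm (((c:ℝ):ℂ) • M) = c * traceNorm M := by
  have h1 : (((c:ℝ):ℂ) • M)ᴴ * (((c:ℝ):ℂ) • M) = (((c*c:ℝ):ℂ)) • (Mᴴ * M) := by
    rw [Matrix.conjTranspose_smul, Matrix.smul_mul, Matrix.mul_smul, smul_smul]
    congr 1
    rw [Complex.ofReal_mul]
    simp [mul_comm]
  rw [traceNorm, h1, msqrt_smul (posSemidef_conjTranspose_mul_self M) (mul_nonneg hc hc),
    Real.sqrt_mul_self hc, Matrix.trace_smul]
  rw [traceNorm]
  simp [Complex.smul_re]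

lemma tn_conjT (M : Matrix n n ℂ) : traceNorm Mᴴ = traceNorm M := by
  have key : ∀ N : Matrix n n ℂ, traceNorm N ≤ traceNorm Nᴴ := by
    intro N
    obtain ⟨V, hV, htr⟩ := tn_attain N
    have hVs : star V ∈ Matrix.unitaryGroup n ℂ := Unitary.star_mem hV
    have h2 : (star (star V) * Nᴴ).trace = ((traceNorm N : ℝ) : ℂ) := by
      rw [star_star]
      calc (V * Nᴴ).trace = (Nᴴ * V).trace := Matrix.trace_mul_comm _ _
        _ = ((star V * N)ᴴ).trace := by
            rw [Matrix.star_eq_conjTranspose, Matrix.conjTranspose_mul,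
              Matrix.conjTranspose_conjTranspose]
        _ = star ((star V * N).trace) := Matrix.trace_conjTranspose _
        _ = ((traceNorm N : ℝ) : ℂ) := by
            rw [htr, Complex.star_def, Complex.conj_ofReal]
    have h3 := tn_bound Nᴴ (star V) hVs
    rw [h2] at h3
    simpa [Complex.norm_real, abs_of_nonneg (tn_nonneg N)] using h3
  refine le_antisymm (by simpa using key Mᴴ) (key M)


lemma sandwich {V C : Matrix n n ℂ} (hV : V ∈ Matrix.unitaryGroup n ℂ) :
    (star V * C)ᴴ * (star V * C) = Cᴴ * C := by
  rw [Matrix.conjTranspose_mul, Matrix.star_eq_conjTranspose,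
    Matrix.conjTranspose_conjTranspose, Matrix.mul_assoc, ← Matrix.mul_assoc V Vᴴ C]
  rw [show V * Vᴴ = 1 from (Matrix.mem_unitaryGroup_iff).mp hV, Matrix.one_mul]

lemma fvg {ρ τ : Matrix n n ℂ} (hρ : ρ.PosSemidef) (hρt : ρ.trace = 1)
    (hτ : τ.PosSemidef) (hτt : τ.trace = 1) :
    traceNorm (ρ - τ) ≤ 2 * Real.sqrt (1 - (traceNorm (msqrt τ * msqrt ρ))^2) := by
  set r : ℝ := traceNorm (msqrt τ * msqrt ρ) with hrdef
  have hr0 : 0 ≤ r := tn_nonneg _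
  obtain ⟨W, hW, hWtr⟩ := tn_attain (msqrt τ * msqrt ρ)
  set A : Matrix n n ℂ := msqrt ρ with hAdef
  set B : Matrix n n ℂ := msqrt τ * W with hBdef
  have hAh : Aᴴ = A := msqrt_herm hρ
  have hAA : A * Aᴴ = ρ := by rw [hAh, msqrt_mul_self hρ]
  have hWW' : W * star W = 1 := (Matrix.mem_unitaryGroup_iff).mp hW
  have hBB : B * Bᴴ = τ := by
    rw [hBdef, Matrix.conjTranspose_mul, ← Matrix.mul_assoc, Matrix.mul_assoc (msqrt τ) W Wᴴ,
      ← Matrix.star_eq_conjTranspose W, hWW', Matrix.mul_one, msqrt_herm hτ, msqrt_mul_self hτ]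
  set C : Matrix n n ℂ := A - B with hCdef
  set D : Matrix n n ℂ := A + B with hDdef
  have hkey : C * Dᴴ + D * Cᴴ = (2:ℂ) • (ρ - τ) := by
    rw [← hAA, ← hBB, hCdef, hDdef, two_smul]
    simp only [Matrix.conjTranspose_add, Matrix.conjTranspose_sub]
    noncomm_ring
  -- traces of CᴴC and DᴴD
  have hz : (star W * (msqrt τ * msqrt ρ)).trace = ((r:ℝ):ℂ) := hWtr
  have hAB : (Aᴴ * B).trace = ((r:ℝ):ℂ) := by
    have h1 : Aᴴ * B = (star W * (msqrt τ * msqrt ρ))ᴴ := by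
      rw [Matrix.star_eq_conjTranspose, Matrix.conjTranspose_mul, Matrix.conjTranspose_mul,
        Matrix.conjTranspose_conjTranspose, msqrt_herm hρ, msqrt_herm hτ, hBdef]
      simp only [Matrix.mul_assoc]
    rw [h1, Matrix.trace_conjTranspose, hz, Complex.star_def, Complex.conj_ofReal]
  have hBA : (Bᴴ * A).trace = ((r:ℝ):ℂ) := by
    have h1 : Bᴴ * A = star W * (msqrt τ * msqrt ρ) := by
      rw [hBdef, Matrix.conjTranspose_mul, msqrt_herm hτ, Matrix.star_eq_conjTranspose]
      simp only [Matrix.mul_assoc]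
      rfl
    rw [h1, hz]
  have hAtr : (Aᴴ * A).trace = 1 := by rw [hAh, hAdef, msqrt_mul_self hρ, hρt]
  have hBtr : (Bᴴ * B).trace = 1 := by
    have h1 : Bᴴ * B = Wᴴ * τ * W := by
      calc Bᴴ * B = (Wᴴ * (msqrt τ)ᴴ) * (msqrt τ * W) := by
            rw [hBdef, Matrix.conjTranspose_mul]
        _ = Wᴴ * ((msqrt τ)ᴴ * msqrt τ) * W := by
            rw [Matrix.mul_assoc, Matrix.mul_assoc, Matrix.mul_assoc]
        _ = Wᴴ * τ * W := by rw [msqrt_herm hτ, msqrt_mul_self hτ]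
    rw [h1, Matrix.trace_mul_cycle, ← Matrix.star_eq_conjTranspose, hWW',
      Matrix.one_mul, hτt]
  have hCtr : (Cᴴ * C).trace = ((2 - 2*r : ℝ):ℂ) := by
    have h1 : Cᴴ * C = Aᴴ*A - Aᴴ*B - Bᴴ*A + Bᴴ*B := by
      rw [hCdef, Matrix.conjTranspose_sub]
      noncomm_ring
    rw [h1, Matrix.trace_add, Matrix.trace_sub, Matrix.trace_sub, hAtr, hBtr, hAB, hBA]
    push_cast
    ring
  have hDtr : (Dᴴ * D).trace = ((2 + 2*r : ℝ):ℂ) := by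
    have h1 : Dᴴ * D = Aᴴ*A + Aᴴ*B + Bᴴ*A + Bᴴ*B := by
      rw [hDdef, Matrix.conjTranspose_add]
      noncomm_ring
    rw [h1, Matrix.trace_add, Matrix.trace_add, Matrix.trace_add, hAtr, hBtr, hAB, hBA]
    push_cast
    ring
  have hc2 : (Cᴴ*C).trace.re = 2 - 2*r := by rw [hCtr, Complex.ofReal_re]
  have hd2 : (Dᴴ*D).trace.re = 2 + 2*r := by rw [hDtr, Complex.ofReal_re]
  have hr1 : r ≤ 1 := by
    have h0 := psd_trace_re_nonneg (posSemidef_conjTranspose_mul_self C)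
    rw [hc2] at h0; linarith
  obtain ⟨V, hV, hVtr⟩ := tn_attain (ρ - τ)
  have h2tn : (2:ℝ) * traceNorm (ρ - τ) = ‖(star V * (C * Dᴴ + D * Cᴴ)).trace‖ := by
    rw [hkey, Matrix.mul_smul, Matrix.trace_smul, hVtr, smul_eq_mul, norm_mul]
    simp [Complex.norm_real, abs_of_nonneg (tn_nonneg _)]
  have hsplit : ‖(star V * (C * Dᴴ + D * Cᴴ)).trace‖
      ≤ ‖(star V * (C * Dᴴ)).trace‖ + ‖(star V * (D * Cᴴ)).trace‖ := by
    rw [Matrix.mul_add, Matrix.trace_add]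
    exact norm_add_le _ _
  have hb1 : ‖(star V * (C * Dᴴ)).trace‖
      ≤ Real.sqrt ((Dᴴ*D).trace.re) * Real.sqrt ((Cᴴ*C).trace.re) := by
    have h1 : (star V * (C * Dᴴ)).trace = (Dᴴ * (star V * C)).trace := by
      rw [← Matrix.mul_assoc, Matrix.trace_mul_comm]
    rw [h1]
    have h2 := frob_cs D (star V * C)
    rwa [sandwich hV] at h2
  have hb2 : ‖(star V * (D * Cᴴ)).trace‖
      ≤ Real.sqrt ((Cᴴ*C).trace.re) * Real.sqrt ((Dᴴ*D).trace.re) := by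
    have h1 : (star V * (D * Cᴴ)).trace = (Cᴴ * (star V * D)).trace := by
      rw [← Matrix.mul_assoc, Matrix.trace_mul_comm]
    rw [h1]
    have h2 := frob_cs C (star V * D)
    rwa [sandwich hV] at h2
  have hfin : Real.sqrt (2+2*r) * Real.sqrt (2-2*r) = 2 * Real.sqrt (1 - r^2) := by
    rw [← Real.sqrt_mul (by linarith)]
    rw [show (2+2*r)*(2-2*r) = 2^2*(1-r^2) by ring]
    rw [Real.sqrt_mul (by positivity), Real.sqrt_sq (by norm_num)]
  rw [hc2, hd2] at hb1 hb2
  linarith [h2tn ▸ (hsplit.trans (add_le_add hb1 hb2))]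


lemma fid_le {ρ σ : Matrix n n ℂ} (hρ : ρ.PosSemidef) (hσ : σ.PosSemidef) :
    traceNorm (msqrt ρ * msqrt σ) ≤ Real.sqrt (ρ.trace.re) * Real.sqrt (σ.trace.re) := by
  have h := tn_cs (msqrt ρ) (msqrt σ)
  rwa [msqrt_herm hρ, msqrt_mul_self hρ, msqrt_herm hσ, msqrt_mul_self hσ] at h

end Aux


theorem stmt5 {n : Type*} [Fintype n] [DecidableEq n] (ρ ρ' σ : Matrix n n ℂ)
    (hρ : IsState ρ) (hσ : IsState σ) (hρ' : ρ'.PosSemidef) (hρ't : ρ'.trace.re ≤ 1)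
    (ε lam : ℝ) (hε0 : 0 ≤ ε) (hε1 : ε < 1)
    (hP : pDist ρ ρ' ≤ ε) (hD : loe ρ' ((((2 : ℝ) ^ lam : ℝ) : ℂ) • σ)) :
    traceNorm (ρ - (ρ'.trace)⁻¹ • ρ') / 2 ≤ ε ∧
    loe ((ρ'.trace)⁻¹ • ρ')
      ((((2 : ℝ) ^ (lam + Real.logb 2 (1 / (1 - ε))) : ℝ) : ℂ) • σ) := by
  classical
  have hρpsd := hρ.1
  have hσpsd := hσ.1
  set t : ℝ := ρ'.trace.re with htdef
  have ht0 : 0 ≤ t := psd_trace_re_nonneg hρ'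
  have htC : ρ'.trace = ((t:ℝ):ℂ) := psd_trace_real hρ'
  set F : ℝ := traceNorm (msqrt ρ * msqrt ρ') with hFdef
  have hF0 : 0 ≤ F := tn_nonneg _
  have hρre : ρ.trace.re = 1 := by rw [hρ.2]; rfl
  have hgfid : gFid ρ ρ' = F^2 := by
    rw [gFid, hρre]
    simp
    rfl
  have hFsq : 1 - ε^2 ≤ F^2 := by
    rw [pDist] at hP
    by_cases hcase : 1 - gFid ρ ρ' ≤ 0
    · rw [hgfid] at hcase; nlinarith
    · push_neg at hcase
      have h3 := Real.sq_sqrt (le_of_lt hcase)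
      have h4 : 1 - gFid ρ ρ' ≤ ε^2 := by
        nlinarith [Real.sqrt_nonneg (1 - gFid ρ ρ')]
      rw [hgfid] at h4; linarith
  have hFt : F^2 ≤ t := by
    have h1 : F ≤ Real.sqrt (ρ.trace.re) * Real.sqrt (ρ'.trace.re) := fid_le hρpsd hρ'
    rw [hρre, Real.sqrt_one, one_mul] at h1
    nlinarith [Real.sq_sqrt ht0, Real.sqrt_nonneg t]
  have htlow : 1 - ε ≤ t := by nlinarith
  have htpos : 0 < t := by linarith
  have hinv : (ρ'.trace)⁻¹ = ((t⁻¹ : ℝ):ℂ) := by rw [htC, Complex.ofReal_inv]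
  set τ : Matrix n n ℂ := (ρ'.trace)⁻¹ • ρ' with hτdef
  have hτpsd : τ.PosSemidef := by
    rw [hτdef, hinv]; exact psd_smul hρ' (inv_nonneg.mpr ht0)
  have hτtr : τ.trace = 1 := by
    rw [hτdef, Matrix.trace_smul, htC, smul_eq_mul]
    rw [inv_mul_cancel₀ (by exact_mod_cast ne_of_gt htpos)]
  have hmsτ : msqrt τ = ((Real.sqrt t⁻¹ : ℝ):ℂ) • msqrt ρ' := by
    rw [hτdef, hinv]; exact msqrt_smul hρ' (inv_nonneg.mpr ht0)
  have hr : traceNorm (msqrt τ * msqrt ρ) = Real.sqrt t⁻¹ * F := by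
    rw [hmsτ, Matrix.smul_mul, tn_smul _ (Real.sqrt_nonneg _)]
    congr 1
    rw [← tn_conjT, Matrix.conjTranspose_mul, msqrt_herm hρ', msqrt_herm hρpsd]
  have hfvg := fvg hρpsd hρ.2 hτpsd hτtr
  have ht1 : t ≤ 1 := hρ't
  have htinv1 : 1 ≤ t⁻¹ := (one_le_inv₀ htpos).mpr ht1
  have hrsq : 1 - (traceNorm (msqrt τ * msqrt ρ))^2 ≤ ε^2 := by
    rw [hr, mul_pow, Real.sq_sqrt (inv_nonneg.mpr ht0)]
    nlinarith [mul_le_mul_of_nonneg_left htinv1 (sq_nonneg F)]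
  have part1 : traceNorm (ρ - τ) / 2 ≤ ε := by
    have h5 : Real.sqrt (1 - (traceNorm (msqrt τ * msqrt ρ))^2) ≤ ε := by
      have h6 := Real.sqrt_le_sqrt hrsq
      rwa [Real.sqrt_sq hε0] at h6
    linarith
  refine ⟨part1, ?_⟩
  rw [loe]
  set k : ℝ := (2:ℝ)^lam with hkdef
  have hk0 : 0 < k := Real.rpow_pos_of_pos (by norm_num) lam
  have hε1' : (0:ℝ) < 1 - ε := by linarith
  have hlog : ((2:ℝ) ^ (lam + Real.logb 2 (1/(1-ε))) : ℝ) = k * (1/(1-ε)) := by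
    rw [Real.rpow_add (by norm_num), Real.rpow_logb (by norm_num) (by norm_num) (by positivity)]
  have hcoeff : 0 ≤ k*(1/(1-ε)) - t⁻¹*k := by
    have h7 : t⁻¹ ≤ 1/(1-ε) := by
      rw [one_div]
      exact inv_anti₀ hε1' htlow
    nlinarith
  have hsplit : (((k * (1/(1-ε)) : ℝ):ℂ)) • σ - τ
      = (((k*(1/(1-ε)) - t⁻¹*k : ℝ):ℂ)) • σ
        + ((t⁻¹:ℝ):ℂ) • ((((k:ℝ):ℂ)) • σ - ρ') := by
    rw [hτdef, hinv]
    push_cast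
    module
  have hgoal : ((((2:ℝ) ^ (lam + Real.logb 2 (1/(1-ε))) : ℝ):ℂ)) • σ - τ
      = (((k*(1/(1-ε)) - t⁻¹*k : ℝ):ℂ)) • σ
        + ((t⁻¹:ℝ):ℂ) • ((((k:ℝ):ℂ)) • σ - ρ') := by
    rw [hlog] at *
    exact hsplit
  rw [hgoal]
  exact Matrix.PosSemidef.add (psd_smul hσpsd hcoeff) (psd_smul hD (inv_nonneg.mpr ht0))


end
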